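/- For any norm X on ℝ², the generalized pi-value satisfies ϖ(X) ≥ 3. -/

import Mathlib

open Set

noncomputable section

/-- `N` is a norm on the real vector space `E`. -/
structure IsNorm {E : Type*} [AddCommGroup E] [Module ℝ E] (N : E → ℝ) : Prop where
  eq_zero_iff : ∀ v : E, N v = 0 ↔ v = 0
  smul_eq : ∀ (c : ℝ) (v : E), N (c • v) = |c| * N v
  add_le : ∀ u v : E, N (u + v) ≤ N u + N v

/-- Length of the path `φ` on `[a, b]`, with respect to the (norm) function `N`:
the supremum over partitions `a = t 0 ≤ ⋯ ≤ t n = b` of the sums of distances. -/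
noncomputable def pathLen {E : Type*} [AddCommGroup E] [Module ℝ E] (N : E → ℝ)
    (φ : ℝ → E) (a b : ℝ) : ENNReal :=
  ⨆ (n : ℕ) (t : Fin (n + 1) → ℝ) (_ : Monotone t) (_ : t 0 = a)
    (_ : t (Fin.last n) = b),
    ∑ i : Fin n, ENNReal.ofReal (N (φ (t i.succ) - φ (t i.castSucc)))

/-- `φ` is a parametrization of the boundary loop of `B ⊆ ℝ² = ℂ`. -/
def IsBoundaryParam (B : Set ℂ) (φ : ℝ → ℂ) : Prop :=
  Continuous φ ∧ (∀ t : ℝ, φ (t + 1) = φ t) ∧ Set.InjOn φ (Set.Ico 0 1) ∧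
    φ '' Set.Ico 0 1 = frontier B

/-- A convex body in the plane: compact, convex, with nonempty interior. -/
def IsConvexBody (B : Set ℂ) : Prop :=
  IsCompact B ∧ Convex ℝ B ∧ (interior B).Nonempty

/-- `C` is a convex arc from `u` to `v`: either the segment `[u, v]`, or a set whose
union with the segment `[v, u]` is the boundary of a convex body (meeting the
segment only at the endpoints). -/
def IsConvexArc (C : Set ℂ) (u v : ℂ) : Prop :=
  u ∈ C ∧ v ∈ C ∧
    (C = segment ℝ u v ∨
      ∃ B : Set ℂ, IsConvexBody B ∧ C ∪ segment ℝ v u = frontier B ∧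
        C ∩ segment ℝ v u = {u, v})

/-- `φ` is a convex path from `u` to `v`, parametrized on `[0, 1]`. -/
def IsConvexPath (φ : ℝ → ℂ) (u v : ℂ) : Prop :=
  Continuous φ ∧ φ 0 = u ∧ φ 1 = v ∧ Set.InjOn φ (Set.Icc 0 1) ∧
    IsConvexArc (φ '' Set.Icc 0 1) u v

variable {N : ℂ → ℝ}

lemma auxNeg (hN : IsNorm N) (x : ℂ) : N (-x) = N x := by
  have := hN.smul_eq (-1) x; simpa using this

lemma auxNonneg (hN : IsNorm N) (x : ℂ) : 0 ≤ N x := by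
  have h0 : N (0:ℂ) = 0 := (hN.eq_zero_iff 0).2 rfl
  have h := hN.add_le x (-x)
  rw [add_neg_cancel, h0, auxNeg hN] at h
  linarith

lemma auxLower (hN : IsNorm N) (a b : ℂ) : N a - N b ≤ N (a - b) := by
  have h := hN.add_le (a - b) b
  rw [sub_add_cancel] at h
  linarith

lemma auxCont (hN : IsNorm N) : Continuous N := by
  have hb : ∀ z : ℂ, N z ≤ (N 1 + N Complex.I) * ‖z‖ := by
    intro z
    have hz : z = z.re • (1:ℂ) + z.im • Complex.I := by
      simp [Complex.real_smul, Complex.re_add_im]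
    calc N z = N (z.re • (1:ℂ) + z.im • Complex.I) := by rw [← hz]
      _ ≤ N (z.re • (1:ℂ)) + N (z.im • Complex.I) := hN.add_le _ _
      _ = |z.re| * N 1 + |z.im| * N Complex.I := by rw [hN.smul_eq, hN.smul_eq]
      _ ≤ ‖z‖ * N 1 + ‖z‖ * N Complex.I := by
          have h1 := Complex.abs_re_le_norm z
          have h2 := Complex.abs_im_le_norm z
          have := auxNonneg hN (1:ℂ)
          have := auxNonneg hN Complex.I
          nlinarith
      _ = (N 1 + N Complex.I) * ‖z‖ := by ring
  have hlip : LipschitzWith (Real.toNNReal (N 1 + N Complex.I)) N := by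
    apply LipschitzWith.of_dist_le_mul
    intro x y
    rw [Real.dist_eq, Complex.dist_eq]
    rw [abs_sub_le_iff]
    constructor
    · calc N x - N y ≤ N (x - y) := auxLower hN x y
        _ ≤ (N 1 + N Complex.I) * ‖x - y‖ := hb _
        _ ≤ ↑(Real.toNNReal (N 1 + N Complex.I)) * ‖x - y‖ := by
            have : (N 1 + N Complex.I) ≤ ↑(Real.toNNReal (N 1 + N Complex.I)) := by
              simp [Real.coe_toNNReal', le_max_left]
            have := norm_nonneg (x - y)
            nlinarith
    · calc N y - N x ≤ N (y - x) := auxLower hN y x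
        _ = N (x - y) := by rw [← auxNeg hN (x - y)]; congr 1; ring
        _ ≤ (N 1 + N Complex.I) * ‖x - y‖ := hb _
        _ ≤ ↑(Real.toNNReal (N 1 + N Complex.I)) * ‖x - y‖ := by
            have : (N 1 + N Complex.I) ≤ ↑(Real.toNNReal (N 1 + N Complex.I)) := by
              simp [Real.coe_toNNReal', le_max_left]
            have := norm_nonneg (x - y)
            nlinarith
  exact hlip.continuous

lemma auxFrontier (hN : IsNorm N) :
    frontier {z : ℂ | N z ≤ 1} = {z : ℂ | N z = 1} := by
  have hc := auxCont hN
  ext x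
  rw [frontier_eq_closure_inter_closure]
  constructor
  · rintro ⟨h1, h2⟩
    have hcl : IsClosed {z : ℂ | N z ≤ 1} := isClosed_le hc continuous_const
    have hle : N x ≤ 1 := by
      have := hcl.closure_eq ▸ h1; exact this
    have hge : 1 ≤ N x := by
      have hset : {z : ℂ | N z ≤ 1}ᶜ = {z : ℂ | (fun _ => (1:ℝ)) z < N z} := by
        ext z; simp [not_le]
      rw [hset] at h2
      have := closure_lt_subset_le continuous_const hc h2
      exact this
    exact le_antisymm hle hge
  · intro hx
    have hx1 : N x = 1 := hx
    constructor
    · exact subset_closure (by simp [hx1] : x ∈ {z : ℂ | N z ≤ 1})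
    · rw [mem_closure_iff_seq_limit]
      refine ⟨fun n => (1 + ((n:ℝ)+1)⁻¹) • x, ?_, ?_⟩
      · intro n
        simp only [mem_compl_iff, mem_setOf_eq, not_le, hN.smul_eq, hx1, mul_one]
        have h1 : (0:ℝ) < ((n:ℝ)+1)⁻¹ := by positivity
        rw [abs_of_pos (by linarith)]
        linarith
      · have h0 : Filter.Tendsto (fun n : ℕ => ((n:ℝ)+1)⁻¹) Filter.atTop (nhds 0) := by
          simpa [one_div] using tendsto_one_div_add_atTop_nhds_zero_nat (𝕜 := ℝ)
        have h1 : Filter.Tendsto (fun n : ℕ => 1 + ((n:ℝ)+1)⁻¹) Filter.atTop (nhds 1) := by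
          simpa using (tendsto_const_nhds.add h0)
        have := h1.smul_const x
        simpa using this

lemma auxHex (hN : IsNorm N) {u v : ℂ} (hu : N u = 1) (hv : N v = 1)
    (hvu : N (v - u) = 1) :
    ∀ a b : Fin 6, a ≠ b →
      1 ≤ N (![u, v, v - u, -u, -v, u - v] a - ![u, v, v - u, -u, -v, u - v] b) := by
  have key : ∀ w w' : ℂ, w = w' → 1 ≤ N w' → 1 ≤ N w := fun w w' h h' => h ▸ h'
  have kneg : ∀ w : ℂ, 1 ≤ N w → 1 ≤ N (-w) := fun w h => by rw [auxNeg hN]; exact h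
  have two : ∀ x : ℂ, N (x + x) = 2 * N x := by
    intro x
    have : x + x = (2:ℝ) • x := by rw [two_smul]
    rw [this, hN.smul_eq]; norm_num
  have huv : N (u - v) = 1 := by
    have : u - v = -(v - u) := by ring
    rw [this, auxNeg hN, hvu]
  have ku : 1 ≤ N u := hu.ge
  have kv : 1 ≤ N v := hv.ge
  have kvu : 1 ≤ N (v - u) := hvu.ge
  have kuv : 1 ≤ N (u - v) := huv.ge
  have k2u : 1 ≤ N (u + u) := by rw [two, hu]; norm_num
  have k2v : 1 ≤ N (v + v) := by rw [two, hv]; norm_num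
  have k2vu : 1 ≤ N ((v - u) + (v - u)) := by rw [two, hvu]; norm_num
  have ksum : 1 ≤ N (u + v) := by
    have h := hN.add_le (u + v) (u - v)
    rw [show (u + v) + (u - v) = u + u by ring, two, hu, huv] at h
    linarith
  have k2uv : 1 ≤ N (u + u - v) := by
    have h := hN.add_le (u + u - v) v
    rw [show (u + u - v) + v = u + u by ring, two, hu, hv] at h
    linarith
  have k2vuu : 1 ≤ N (v + v - u) := by
    have h := hN.add_le (v + v - u) u
    rw [show (v + v - u) + u = v + v by ring, two, hv, hu] at h
    linarith
  have e0 : ∀ h : (0:ℕ) < 6, (![u, v, v - u, -u, -v, u - v] : Fin 6 → ℂ) ⟨0, h⟩ = u := fun _ => rfl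
  have e1 : ∀ h : (1:ℕ) < 6, (![u, v, v - u, -u, -v, u - v] : Fin 6 → ℂ) ⟨1, h⟩ = v := fun _ => rfl
  have e2 : ∀ h : (2:ℕ) < 6, (![u, v, v - u, -u, -v, u - v] : Fin 6 → ℂ) ⟨2, h⟩ = v - u := fun _ => rfl
  have e3 : ∀ h : (3:ℕ) < 6, (![u, v, v - u, -u, -v, u - v] : Fin 6 → ℂ) ⟨3, h⟩ = -u := fun _ => rfl
  have e4 : ∀ h : (4:ℕ) < 6, (![u, v, v - u, -u, -v, u - v] : Fin 6 → ℂ) ⟨4, h⟩ = -v := fun _ => rfl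
  have e5 : ∀ h : (5:ℕ) < 6, (![u, v, v - u, -u, -v, u - v] : Fin 6 → ℂ) ⟨5, h⟩ = u - v := fun _ => rfl
  intro a b hab
  fin_cases a <;> fin_cases b <;> simp only [e0, e1, e2, e3, e4, e5] <;>
  first
    | exact absurd rfl hab
    | (refine key _ _ ?_ ku; ring1)
    | (refine key _ _ ?_ kv; ring1)
    | (refine key _ _ ?_ kvu; ring1)
    | (refine key _ _ ?_ kuv; ring1)
    | (refine key _ _ ?_ k2u; ring1)
    | (refine key _ _ ?_ k2v; ring1)
    | (refine key _ _ ?_ k2vu; ring1)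
    | (refine key _ _ ?_ ksum; ring1)
    | (refine key _ _ ?_ k2uv; ring1)
    | (refine key _ _ ?_ k2vuu; ring1)
    | (refine key _ _ ?_ (kneg _ ku); ring1)
    | (refine key _ _ ?_ (kneg _ kv); ring1)
    | (refine key _ _ ?_ (kneg _ kvu); ring1)
    | (refine key _ _ ?_ (kneg _ k2u); ring1)
    | (refine key _ _ ?_ (kneg _ k2v); ring1)
    | (refine key _ _ ?_ (kneg _ k2vu); ring1)
    | (refine key _ _ ?_ (kneg _ ksum); ring1)
    | (refine key _ _ ?_ (kneg _ k2uv); ring1)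
    | (refine key _ _ ?_ (kneg _ k2vuu); ring1)

/-- For any norm on the plane, the generalized pi-value is at least 3. -/
theorem stmt16 (N : ℂ → ℝ) (hN : IsNorm N) (φ : ℝ → ℂ)
    (hφ : IsBoundaryParam {z : ℂ | N z ≤ 1} φ) :
    3 ≤ pathLen N φ 0 1 / 2 := by
  obtain ⟨hcont, hper, hinj, himg⟩ := hφ
  rw [auxFrontier hN] at himg
  set u : ℂ := φ 0 with hu_def
  have hmem : ∀ r : ℝ, r ∈ Ico (0:ℝ) 1 → N (φ r) = 1 := by
    intro r hr
    have : φ r ∈ φ '' Ico 0 1 := ⟨r, hr, rfl⟩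
    rw [himg] at this; exact this
  have hu1 : N u = 1 := hmem 0 (by constructor <;> norm_num)
  have hφ1 : φ 1 = u := by have := hper 0; rw [zero_add] at this; exact this
  -- parameter for -u
  have hmu1 : N (-u) = 1 := by rw [auxNeg hN, hu1]
  obtain ⟨s0, hs0mem, hs0⟩ : ∃ r ∈ Ico (0:ℝ) 1, φ r = -u := by
    have : -u ∈ φ '' Ico 0 1 := by rw [himg]; exact hmu1
    obtain ⟨r, hr, h⟩ := this; exact ⟨r, hr, h⟩
  -- IVT to find v with N (v - u) = 1
  have hciv : ContinuousOn (fun r => N (φ r - u)) (Icc 0 s0) :=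
    ((auxCont hN).comp (hcont.sub continuous_const)).continuousOn
  have h1mem : (1:ℝ) ∈ Icc (N (φ 0 - u)) (N (φ s0 - u)) := by
    constructor
    · have : φ 0 - u = 0 := by rw [← hu_def]; ring
      rw [this, (hN.eq_zero_iff 0).2 rfl]; norm_num
    · rw [hs0]
      have : -u - u = (-2:ℝ) • u := by
        rw [show ((-2:ℝ) • u) = ((-2:ℝ):ℂ) * u by rw [Complex.real_smul]]
        push_cast; ring
      rw [this, hN.smul_eq, hu1]; norm_num
  obtain ⟨t1, ht1mem, ht1⟩ := intermediate_value_Icc hs0mem.1 hciv h1mem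
  set v : ℂ := φ t1 with hv_def
  have hvu1 : N (v - u) = 1 := ht1
  have hv1 : N v = 1 := hmem t1 ⟨ht1mem.1, lt_of_le_of_lt ht1mem.2 hs0mem.2⟩
  -- hexagon
  set H : Fin 6 → ℂ := ![u, v, v - u, -u, -v, u - v] with hH_def
  have hex := auxHex hN hu1 hv1 hvu1
  have hH1 : ∀ j : Fin 6, N (H j) = 1 := by
    intro j
    fin_cases j
    · exact hu1
    · exact hv1
    · exact hvu1
    · exact hmu1
    · show N (-v) = 1
      rw [auxNeg hN, hv1]
    · show N (u - v) = 1
      rw [show u - v = -(v - u) by ring, auxNeg hN, hvu1]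
  -- parameters for the five non-u vertices
  have hpar : ∀ k : Fin 5, ∃ r ∈ Ico (0:ℝ) 1, φ r = H k.succ := by
    intro k
    have : H k.succ ∈ φ '' Ico 0 1 := by rw [himg]; exact hH1 k.succ
    obtain ⟨r, hr, h⟩ := this; exact ⟨r, hr, h⟩
  choose s hsmem hsval using hpar
  set σ : Equiv.Perm (Fin 5) := Tuple.sort s with hσ_def
  have hqmono : Monotone (s ∘ σ) := Tuple.monotone_sort s
  set q : Fin 5 → ℝ := s ∘ σ with hq_def
  set t : Fin 7 → ℝ := ![0, q 0, q 1, q 2, q 3, q 4, 1] with ht_def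
  have hqmem : ∀ k, q k ∈ Ico (0:ℝ) 1 := fun k => hsmem (σ k)
  have hqval : ∀ k, φ (q k) = H ((σ k).succ) := fun k => hsval (σ k)
  have hmono : Monotone t := by
    rw [Fin.monotone_iff_le_succ]
    intro i
    fin_cases i
    · exact (hqmem 0).1
    · exact hqmono (show (0:Fin 5) ≤ 1 by decide)
    · exact hqmono (show (1:Fin 5) ≤ 2 by decide)
    · exact hqmono (show (2:Fin 5) ≤ 3 by decide)
    · exact hqmono (show (3:Fin 5) ≤ 4 by decide)
    · exact (hqmem 4).2.le
  have ht0 : t 0 = 0 := rfl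
  have htlast : t (Fin.last 6) = 1 := rfl
  -- the six gap values
  have hgap : ∀ i : Fin 6,
      (1:ENNReal) ≤ ENNReal.ofReal (N (φ (t i.succ) - φ (t i.castSucc))) := by
    have key : ∀ a b : Fin 6, a ≠ b →
        (1:ENNReal) ≤ ENNReal.ofReal (N (H a - H b)) := by
      intro a b hab
      rw [show (1:ENNReal) = ENNReal.ofReal 1 by simp]
      exact ENNReal.ofReal_le_ofReal (hex a b hab)
    have hsuccinj : Function.Injective (fun k : Fin 5 => (σ k).succ) :=
      fun a b h => σ.injective (Fin.succ_injective _ h)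
    intro i
    fin_cases i
    · -- gap 0: φ (t 1) - φ (t 0) = H (σ 0).succ - H 0
      have e1 : φ (t 1) = H ((σ 0).succ) := hqval 0
      have e0 : φ (t 0) = H 0 := rfl
      calc (1:ENNReal) ≤ ENNReal.ofReal (N (H ((σ 0).succ) - H 0)) :=
            key _ _ (Fin.succ_ne_zero _)
        _ = _ := by rw [← e1, ← e0]; rfl
    · have e1 : φ (t 2) = H ((σ 1).succ) := hqval 1
      have e0 : φ (t 1) = H ((σ 0).succ) := hqval 0
      calc (1:ENNReal) ≤ ENNReal.ofReal (N (H ((σ 1).succ) - H ((σ 0).succ))) :=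
            key _ _ (fun h => (by decide : (1:Fin 5) ≠ 0) (hsuccinj h))
        _ = _ := by rw [← e1, ← e0]; rfl
    · have e1 : φ (t 3) = H ((σ 2).succ) := hqval 2
      have e0 : φ (t 2) = H ((σ 1).succ) := hqval 1
      calc (1:ENNReal) ≤ ENNReal.ofReal (N (H ((σ 2).succ) - H ((σ 1).succ))) :=
            key _ _ (fun h => (by decide : (2:Fin 5) ≠ 1) (hsuccinj h))
        _ = _ := by rw [← e1, ← e0]; rfl
    · have e1 : φ (t 4) = H ((σ 3).succ) := hqval 3
      have e0 : φ (t 3) = H ((σ 2).succ) := hqval 2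
      calc (1:ENNReal) ≤ ENNReal.ofReal (N (H ((σ 3).succ) - H ((σ 2).succ))) :=
            key _ _ (fun h => (by decide : (3:Fin 5) ≠ 2) (hsuccinj h))
        _ = _ := by rw [← e1, ← e0]; rfl
    · have e1 : φ (t 5) = H ((σ 4).succ) := hqval 4
      have e0 : φ (t 4) = H ((σ 3).succ) := hqval 3
      calc (1:ENNReal) ≤ ENNReal.ofReal (N (H ((σ 4).succ) - H ((σ 3).succ))) :=
            key _ _ (fun h => (by decide : (4:Fin 5) ≠ 3) (hsuccinj h))
        _ = _ := by rw [← e1, ← e0]; rfl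
    · have e1 : φ (t 6) = H 0 := by show φ 1 = H 0; rw [hφ1]; rfl
      have e0 : φ (t 5) = H ((σ 4).succ) := hqval 4
      calc (1:ENNReal) ≤ ENNReal.ofReal (N (H 0 - H ((σ 4).succ))) :=
            key _ _ (Ne.symm (Fin.succ_ne_zero _))
        _ = _ := by rw [← e1, ← e0]; rfl
  have hsum : (6:ENNReal) ≤
      ∑ i : Fin 6, ENNReal.ofReal (N (φ (t i.succ) - φ (t i.castSucc))) := by
    calc (6:ENNReal) = ∑ _i : Fin 6, (1:ENNReal) := by simp
      _ ≤ _ := Finset.sum_le_sum (fun i _ => hgap i)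
  have hL : (6:ENNReal) ≤ pathLen N φ 0 1 := by
    refine le_trans hsum ?_
    unfold pathLen
    exact le_iSup_of_le 6 (le_iSup_of_le t (le_iSup_of_le hmono
      (le_iSup_of_le ht0 (le_iSup_of_le htlast le_rfl))))
  rw [ENNReal.le_div_iff_mul_le (Or.inl (by norm_num)) (Or.inl (by norm_num))]
  calc (3:ENNReal) * 2 = 6 := by norm_num
    _ ≤ _ := hL

end
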